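/- arXiv:1210.6100 — 2 statements merged into one kernel-verified Lean document; each statement's English description precedes it below -/
import Mathlib

section
/- Let H be a complex Hilbert space, let D be a bounded selfadjoint operator on H, and let f : ℝ → ℂ be an even Schwartz function. Then f(D) = (1/π) ∫_0^∞ f̂(t) · cos(tD) dt, where the integral is a Bochner integral in the Banach space of bounded operators on H. -/
open MeasureTheory

/-- The Fourier transform with the normalization `f̂(t) = ∫ f(x) e^{-itx} dx`. -/
noncomputable def fourierHat (f : ℝ → ℂ) (t : ℝ) : ℂ :=
  ∫ x : ℝ, f x * Complex.exp (-(Complex.I * t * x))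

/-- Continuous functional calculus of a (selfadjoint) bounded operator `D`
applied to a function `f : ℝ → ℂ`.  Since the spectrum of a selfadjoint
operator is real, we implement it via the `ℂ`-valued continuous functional
calculus applied to `z ↦ f (Re z)`. -/
noncomputable def fc {H : Type*} [NormedAddCommGroup H] [InnerProductSpace ℂ H]
    [CompleteSpace H] (f : ℝ → ℂ) (D : H →L[ℂ] H) : H →L[ℂ] H :=
  cfc (fun z : ℂ => f z.re) D

section Aux

open FourierTransform Real Complex Set

lemma fourierHat_eq (f : ℝ → ℂ) (t : ℝ) :
    fourierHat f t = 𝓕 f (t / (2 * π)) := by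
  rw [Real.fourier_real_eq_integral_exp_smul, fourierHat]
  congr 1; ext x
  rw [smul_eq_mul, mul_comm]
  congr 1
  have h : -2 * π * x * (t / (2 * π)) = -(t * x) := by
    field_simp
  rw [h]; push_cast; ring_nf

lemma fourierHat_integrable (f : SchwartzMap ℝ ℂ) :
    Integrable (fourierHat (fun x => f x)) := by
  have h : fourierHat (fun x => f x) = fun t => 𝓕 (fun x => f x) (t / (2 * π)) := by
    ext t; exact fourierHat_eq _ t
  rw [h]
  have : Integrable (𝓕 (fun x => f x)) := by
    rw [show 𝓕 (fun x => f x) = (SchwartzMap.fourierTransformCLM ℂ f : ℝ → ℂ) by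
      rw [SchwartzMap.fourierTransformCLM_apply, SchwartzMap.fourier_coe]]
    exact (SchwartzMap.fourierTransformCLM ℂ f).integrable
  exact this.comp_div (by positivity : (2 : ℝ) * π ≠ 0)

lemma fourierHat_continuous (f : SchwartzMap ℝ ℂ) :
    Continuous (fourierHat (fun x => f x)) := by
  have h : fourierHat (fun x => f x) = fun t => 𝓕 (fun x => f x) (t / (2 * π)) := by
    ext t; exact fourierHat_eq _ t
  rw [h, show 𝓕 (fun x => f x) = (SchwartzMap.fourierTransformCLM ℂ f : ℝ → ℂ) by
      rw [SchwartzMap.fourierTransformCLM_apply, SchwartzMap.fourier_coe]]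
  exact (SchwartzMap.fourierTransformCLM ℂ f).continuous.comp (by fun_prop)

lemma fourierHat_even (f : SchwartzMap ℝ ℂ) (hf_even : ∀ x : ℝ, f (-x) = f x) (t : ℝ) :
    fourierHat (fun x => f x) (-t) = fourierHat (fun x => f x) t := by
  unfold fourierHat
  rw [← integral_neg_eq_self (fun x => (f x : ℂ) * Complex.exp (-(Complex.I * t * x))) volume]
  congr 1; ext x
  rw [hf_even]
  push_cast
  ring_nf

lemma inversion (f : SchwartzMap ℝ ℂ) (x : ℝ) :
    ∫ t : ℝ, fourierHat (fun y => f y) t * Complex.exp (Complex.I * t * x)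
      = 2 * π * f x := by
  have hinv : ∫ v : ℝ, Complex.exp ((2 * π * v * x : ℝ) * Complex.I) • 𝓕 (fun y => f y) v
      = f x := by
    have h := Continuous.fourierInv_fourier_eq f.continuous f.integrable
      (by rw [show 𝓕 (fun y => f y) = (SchwartzMap.fourierTransformCLM ℂ f : ℝ → ℂ) by
            rw [SchwartzMap.fourierTransformCLM_apply, SchwartzMap.fourier_coe]]
          exact (SchwartzMap.fourierTransformCLM ℂ f).integrable)
    have h2 := congrFun h x
    rw [Real.fourierInv_eq'] at h2
    simp only [RCLike.inner_apply, conj_trivial] at h2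
    rw [← h2]
    congr 1 with v
    congr 2
    push_cast; ring
  have key : (fun t : ℝ => fourierHat (fun y => f y) t * Complex.exp (Complex.I * t * x))
      = fun t : ℝ => (fun v : ℝ => Complex.exp ((2 * π * v * x : ℝ) * Complex.I)
          • 𝓕 (fun y => f y) v) (t / (2 * π)) := by
    ext t
    simp only [smul_eq_mul]
    rw [fourierHat_eq, mul_comm]
    congr 2
    have h : 2 * π * (t / (2 * π)) * x = t * x := by field_simp
    rw [h]; push_cast; ring
  rw [key, MeasureTheory.Measure.integral_comp_div
    (fun v : ℝ => Complex.exp ((2 * π * v * x : ℝ) * Complex.I) • 𝓕 (fun y => f y) v) (2 * π),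
    hinv]
  rw [abs_of_pos (by positivity)]
  push_cast [real_smul]
  ring

lemma halfline (f : SchwartzMap ℝ ℂ) (hf_even : ∀ x : ℝ, f (-x) = f x) (x : ℝ) :
    ∫ t in Ioi (0:ℝ), fourierHat (fun y => f y) t * Complex.cos (t * x)
      = π * f x := by
  set F := fourierHat (fun y => f y) with hF
  have hFint : Integrable F := fourierHat_integrable f
  set ep : ℝ → ℂ := fun t => Complex.exp (Complex.I * t * x) with hep
  set em : ℝ → ℂ := fun t => Complex.exp (-(Complex.I * t * x)) with hem
  have hbp : ∀ t : ℝ, ‖ep t‖ ≤ 1 := by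
    intro t
    simp [hep, Complex.norm_exp]
  have hbm : ∀ t : ℝ, ‖em t‖ ≤ 1 := by
    intro t
    simp [hem, Complex.norm_exp]
  have hcont : Continuous ep := by fun_prop
  have hcontm : Continuous em := by fun_prop
  have h1 : Integrable (fun t : ℝ => F t * ep t) := by
    simpa [mul_comm] using hFint.bdd_mul hcont.aestronglyMeasurable (Filter.Eventually.of_forall hbp)
  have h2 : Integrable (fun t : ℝ => F t * em t) := by
    simpa [mul_comm] using hFint.bdd_mul hcontm.aestronglyMeasurable (Filter.Eventually.of_forall hbm)
  have hsplit : (∫ t in Iic (0:ℝ), F t * ep t) + (∫ t in Ioi (0:ℝ), F t * ep t)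
      = 2 * π * f x := by
    rw [intervalIntegral.integral_Iic_add_Ioi h1.integrableOn h1.integrableOn]
    exact inversion f x
  have hflip : (∫ t in Iic (0:ℝ), F t * ep t) = ∫ t in Ioi (0:ℝ), F t * em t := by
    have h3 := integral_comp_neg_Ioi (0:ℝ) (fun t => F t * ep t)
    rw [neg_zero] at h3
    rw [← h3]
    refine setIntegral_congr_fun measurableSet_Ioi fun t _ => ?_
    simp only [hep, hem]
    rw [hF, fourierHat_even f hf_even]
    push_cast
    ring_nf
  have hcomb : (∫ t in Ioi (0:ℝ), F t * em t) + (∫ t in Ioi (0:ℝ), F t * ep t)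
      = ∫ t in Ioi (0:ℝ), 2 * (F t * Complex.cos (t * x)) := by
    rw [← integral_add h2.integrableOn h1.integrableOn]
    refine setIntegral_congr_fun measurableSet_Ioi fun t _ => ?_
    simp only [hep, hem, Complex.cos]
    ring_nf
  have hkey : ∫ t in Ioi (0:ℝ), 2 * (F t * Complex.cos (t * x)) = 2 * π * f x := by
    rw [← hcomb, ← hflip, hsplit]
  rw [integral_const_mul] at hkey
  linear_combination hkey / 2

end Aux

/-- for a bounded selfadjoint operator `D` on a complex Hilbert
space and an even Schwartz function `f`, one has
`f(D) = (1/π) ∫_0^∞ f̂(t) cos(tD) dt` (a Bochner integral in `B(H)`). -/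
theorem statement1 {H : Type*} [NormedAddCommGroup H] [InnerProductSpace ℂ H]
    [CompleteSpace H] (D : H →L[ℂ] H) (hD : IsSelfAdjoint D)
    (f : SchwartzMap ℝ ℂ) (hf_even : ∀ x : ℝ, f (-x) = f x) :
    fc (fun x => f x) D =
      (1 / (Real.pi : ℂ)) •
        ∫ t in Set.Ioi (0 : ℝ), fourierHat (fun x => f x) t •
          fc (fun x : ℝ => Complex.cos ((t : ℂ) * x)) D := by
  have hN : IsStarNormal D := hD.isStarNormal
  -- the cosine family as continuous maps on the spectrum
  let big : C(ℝ × spectrum ℂ D, ℂ) :=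
    ⟨fun p => Complex.cos ((p.1 : ℂ) * ((p.2 : ℂ).re : ℂ)), by fun_prop⟩
  let g : C(ℝ, C(spectrum ℂ D, ℂ)) := big.curry
  have hg_eq : ∀ t : ℝ, fc (fun x : ℝ => Complex.cos ((t : ℂ) * x)) D = cfcL hN (g t) := by
    intro t
    rw [fc, cfc_apply (fun z : ℂ => Complex.cos ((t : ℂ) * (z.re : ℂ))) D hN (by fun_prop)]
    rfl
  -- restriction of f to the spectrum
  let fK : C(spectrum ℂ D, ℂ) := ⟨fun z => f (z : ℂ).re, by fun_prop⟩
  have hfc_eq : fc (fun x => f x) D = cfcL hN fK := by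
    rw [fc, cfc_apply (fun z : ℂ => f z.re) D hN (by fun_prop)]
    rfl
  -- the integrand in C(spectrum, ℂ)
  set Φ : ℝ → C(spectrum ℂ D, ℂ) := fun t => fourierHat (fun x => f x) t • g t with hΦ
  have hg_norm : ∀ t : ℝ, ‖g t‖ ≤ 1 := by
    intro t
    rw [ContinuousMap.norm_le _ zero_le_one]
    intro z
    show ‖Complex.cos ((t : ℂ) * (((z : ℂ).re : ℝ) : ℂ))‖ ≤ 1
    rw [show ((t : ℂ) * (((z : ℂ).re : ℝ) : ℂ)) = ((t * (z : ℂ).re : ℝ) : ℂ) by push_cast; ring,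
      ← Complex.ofReal_cos, Complex.norm_real, Real.norm_eq_abs]
    exact Real.abs_cos_le_one _
  have hΦcont : Continuous Φ := (fourierHat_continuous f).smul g.continuous
  have hΦint : IntegrableOn Φ (Set.Ioi (0:ℝ)) := by
    refine Integrable.mono' ((fourierHat_integrable f).norm.restrict)
      hΦcont.aestronglyMeasurable.restrict ?_
    refine Filter.Eventually.of_forall fun t => ?_
    show ‖fourierHat (fun x => f x) t • g t‖ ≤ ‖fourierHat (fun x => f x) t‖
    rw [ContinuousMap.norm_le _ (norm_nonneg _)]
    intro z
    show ‖fourierHat (fun x => f x) t • (g t) z‖ ≤ _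
    rw [smul_eq_mul, norm_mul]
    have hz : ‖(g t) z‖ ≤ 1 := (ContinuousMap.norm_coe_le_norm (g t) z).trans (hg_norm t)
    calc ‖fourierHat (fun x => f x) t‖ * ‖(g t) z‖
        ≤ ‖fourierHat (fun x => f x) t‖ * 1 :=
          mul_le_mul_of_nonneg_left hz (norm_nonneg _)
      _ = _ := mul_one _
  have hrhs : (∫ t in Set.Ioi (0:ℝ), fourierHat (fun x => f x) t •
        fc (fun x : ℝ => Complex.cos ((t : ℂ) * x)) D)
      = cfcL hN (∫ t in Set.Ioi (0:ℝ), Φ t) := by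
    rw [← (cfcL (R := ℂ) hN).integral_comp_comm hΦint]
    refine setIntegral_congr_fun measurableSet_Ioi fun t _ => ?_
    rw [hg_eq t, hΦ]
    exact (_root_.map_smul (cfcL (R := ℂ) hN) _ _).symm
  have heval : ∀ (z : spectrum ℂ D) (G : C(spectrum ℂ D, ℂ)),
      ContinuousMap.evalCLM ℂ z G = G z := fun _ _ => rfl
  have hI0 : (∫ t in Set.Ioi (0:ℝ), Φ t) = (Real.pi : ℂ) • fK := by
    ext z
    have hev := (ContinuousMap.evalCLM ℂ z).integral_comp_comm hΦint
    rw [heval] at hev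
    rw [← hev]
    have : (∫ t in Set.Ioi (0:ℝ), ContinuousMap.evalCLM ℂ z (Φ t))
        = ∫ t in Set.Ioi (0:ℝ), fourierHat (fun x => f x) t *
            Complex.cos ((t : ℂ) * ((z : ℂ).re : ℂ)) := by
      refine setIntegral_congr_fun measurableSet_Ioi fun t _ => ?_
      rw [heval]
      show fourierHat (fun x => f x) t • (g t) z = _
      rw [smul_eq_mul]
      rfl
    rw [this, halfline f hf_even ((z : ℂ).re)]
    show _ = (Real.pi : ℂ) * fK z
    rfl
  rw [hrhs, hI0, _root_.map_smul, hfc_eq, smul_smul, one_div,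
    inv_mul_cancel₀ (by exact_mod_cast Real.pi_ne_zero), one_smul]
end

section
/- Let H be a complex Hilbert space, let D and E be bounded selfadjoint operators on H, let P be a bounded operator on H, let r > 0 and a > 0. Suppose cos(tD) ∘ P = cos(tE) ∘ P for all t ∈ [0, 2r], and that the spectrum of E is contained in {λ ∈ ℝ : a ≤ |λ|}. Then for every Schwartz function f : ℝ → ℂ (not necessarily even) whose Fourier transform f̂ is supported in [-r, r], one has ‖f(D) ∘ P‖ ≤ 2 · ‖P‖ · sup{|f(λ)| : λ ∈ ℝ, a ≤ |λ|}. -/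
open MeasureTheory
open scoped FourierTransform Real ComplexConjugate

lemma norm_cos_real_le_one (t x : ℝ) : ‖Complex.cos ((t : ℂ) * (x : ℂ))‖ ≤ 1 := by
  rw [← Complex.ofReal_mul, ← Complex.ofReal_cos, Complex.norm_real, Real.norm_eq_abs]
  exact Real.abs_cos_le_one _

section Helpers

variable {H : Type*} [NormedAddCommGroup H] [InnerProductSpace ℂ H] [CompleteSpace H]

theorem fc_integral_rep (A P : H →L[ℂ] H) (hA : IsSelfAdjoint A)
    {α : Type*} [MeasurableSpace α] [TopologicalSpace α] [OpensMeasurableSpace α]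
    (μ : Measure α) (C : α → ℂ) (θ : α → ℝ) (hC : Integrable C μ) (hθ : Continuous θ)
    (g : ℝ → ℂ) (hg : ∀ x : ℝ, g x = ∫ ω, C ω * Complex.cos ((θ ω : ℂ) * (x : ℂ)) ∂μ)
    (hgc : Continuous g) :
    fc g A ∘L P
      = ∫ ω, C ω • (fc (fun x : ℝ => Complex.cos ((θ ω : ℂ) * (x : ℂ))) A ∘L P) ∂μ := by
  have hA' : IsStarNormal A := hA.isStarNormal
  set K := spectrum ℂ A with hK
  let bigcos : C(ℝ × K, ℂ) :=
    ⟨fun p => Complex.cos ((p.1 : ℂ) * (((p.2 : ℂ).re : ℝ) : ℂ)), by fun_prop⟩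
  let cosK : C(ℝ, C(K, ℂ)) := ContinuousMap.curry bigcos
  let Φ : α → C(K, ℂ) := fun ω => C ω • cosK (θ ω)
  have hΦm : AEStronglyMeasurable Φ μ :=
    hC.aestronglyMeasurable.smul ((cosK.continuous.comp hθ).aestronglyMeasurable)
  have hcosK_norm : ∀ t : ℝ, ‖cosK t‖ ≤ 1 := by
    intro t
    refine (ContinuousMap.norm_le _ zero_le_one).mpr fun z => ?_
    simpa [cosK, bigcos] using norm_cos_real_le_one t (z : ℂ).re
  have hΦi : Integrable Φ μ := by
    refine hC.norm.mono' hΦm ?_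
    filter_upwards with ω
    refine (ContinuousMap.norm_le _ (norm_nonneg (C ω))).mpr fun z => ?_
    show ‖(C ω • cosK (θ ω)) z‖ ≤ ‖C ω‖
    rw [ContinuousMap.smul_apply, norm_smul]
    calc ‖C ω‖ * ‖cosK (θ ω) z‖ ≤ ‖C ω‖ * 1 := by
          have : ‖cosK (θ ω) z‖ ≤ 1 := by
            simpa [cosK, bigcos] using norm_cos_real_le_one (θ ω) (z : ℂ).re
          gcongr
      _ = ‖C ω‖ := mul_one _
  have hgcK : ContinuousOn (fun z : ℂ => g z.re) K :=
    (hgc.comp Complex.continuous_re).continuousOn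
  have hgK : (⟨K.restrict fun z : ℂ => g z.re, hgcK.restrict⟩ : C(K, ℂ)) = ∫ ω, Φ ω ∂μ := by
    ext z
    rw [ContinuousMap.integral_apply hΦi]
    calc (⟨K.restrict fun z : ℂ => g z.re, hgcK.restrict⟩ : C(K, ℂ)) z
        = g (z : ℂ).re := rfl
      _ = ∫ ω, C ω * Complex.cos ((θ ω : ℂ) * (((z : ℂ).re : ℝ) : ℂ)) ∂μ := hg _
      _ = ∫ ω, Φ ω z ∂μ := by
          refine integral_congr_ae (.of_forall fun ω => ?_)
          simp [Φ, cosK, bigcos, smul_eq_mul]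
  let φ := cfcHom (R := ℂ) hA'
  let φL : C(K, ℂ) →L[ℂ] (H →L[ℂ] H) :=
    { toLinearMap := (φ : C(K, ℂ) →⋆ₐ[ℂ] (H →L[ℂ] H)).toAlgHom.toLinearMap,
      cont := (cfcHom_isClosedEmbedding (R := ℂ) hA').continuous }
  let ψ : (H →L[ℂ] H) →L[ℂ] (H →L[ℂ] H) := (ContinuousLinearMap.compL ℂ H H H).flip P
  have hφcos : ∀ t : ℝ,
      φL (cosK t) = cfc (fun z : ℂ => Complex.cos ((t : ℂ) * (((z.re : ℝ)) : ℂ))) A := by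
    intro t
    have hcont : ContinuousOn (fun z : ℂ => Complex.cos ((t : ℂ) * (((z.re : ℝ)) : ℂ))) K :=
      (Complex.continuous_cos.comp (by fun_prop)).continuousOn
    rw [cfc_apply _ A hA' hcont]
    rfl
  calc fc g A ∘L P
      = ψ (φL (⟨K.restrict fun z : ℂ => g z.re, hgcK.restrict⟩ : C(K, ℂ))) := by
        rw [fc, cfc_apply _ A hA' hgcK]; rfl
    _ = ψ (φL (∫ ω, Φ ω ∂μ)) := by rw [hgK]
    _ = ψ (∫ ω, φL (Φ ω) ∂μ) := by rw [ContinuousLinearMap.integral_comp_comm φL hΦi]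
    _ = ∫ ω, ψ (φL (Φ ω)) ∂μ := by
        rw [ContinuousLinearMap.integral_comp_comm ψ (φL.integrable_comp hΦi)]
    _ = ∫ ω, C ω • (fc (fun x : ℝ => Complex.cos ((θ ω : ℂ) * (x : ℂ))) A ∘L P) ∂μ := by
        refine integral_congr_ae (.of_forall fun ω => ?_)
        show ψ (φL (C ω • cosK (θ ω))) = _
        rw [φL.map_smul, ψ.map_smul, hφcos (θ ω)]
        rfl

theorem fc_transfer (D E P : H →L[ℂ] H) (hD : IsSelfAdjoint D) (hE : IsSelfAdjoint E)
    {α : Type*} [MeasurableSpace α] [TopologicalSpace α] [OpensMeasurableSpace α]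
    (μ : Measure α) (C : α → ℂ) (θ : α → ℝ) (hC : Integrable C μ) (hθ : Continuous θ)
    (g : ℝ → ℂ) (hg : ∀ x : ℝ, g x = ∫ ω, C ω * Complex.cos ((θ ω : ℂ) * (x : ℂ)) ∂μ)
    (hgc : Continuous g)
    (htrans : ∀ ω, C ω ≠ 0 →
      fc (fun x : ℝ => Complex.cos ((θ ω : ℂ) * (x : ℂ))) D ∘L P =
        fc (fun x : ℝ => Complex.cos ((θ ω : ℂ) * (x : ℂ))) E ∘L P) :
    fc g D ∘L P = fc g E ∘L P := by
  rw [fc_integral_rep D P hD μ C θ hC hθ g hg hgc,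
    fc_integral_rep E P hE μ C θ hC hθ g hg hgc]
  refine integral_congr_ae (.of_forall fun ω => ?_)
  by_cases h : C ω = 0
  · simp [h]
  · dsimp only
    rw [htrans ω h]

theorem contInt {α : Type*} [MeasurableSpace α] [TopologicalSpace α] [OpensMeasurableSpace α]
    (μ : Measure α) (C : α → ℂ) (θ : α → ℝ) (hC : Integrable C μ) (hθ : Continuous θ) :
    Continuous fun x : ℝ => ∫ ω, C ω * Complex.cos ((θ ω : ℂ) * (x : ℂ)) ∂μ := by
  refine continuous_of_dominated (bound := fun ω => ‖C ω‖) ?_ ?_ hC.norm ?_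
  · intro x
    exact hC.aestronglyMeasurable.mul
      ((Complex.continuous_cos.comp (by fun_prop)).aestronglyMeasurable)
  · intro x
    filter_upwards with ω
    rw [norm_mul]
    calc ‖C ω‖ * ‖Complex.cos ((θ ω : ℂ) * (x : ℂ))‖ ≤ ‖C ω‖ * 1 := by
          have := norm_cos_real_le_one (θ ω) x; gcongr
      _ = ‖C ω‖ := mul_one _
  · filter_upwards with ω
    fun_prop

theorem intCos {α : Type*} [MeasurableSpace α] [TopologicalSpace α] [OpensMeasurableSpace α]
    {μ : Measure α} {C : α → ℂ} (θ : α → ℝ) (hC : Integrable C μ) (hθ : Continuous θ) (x : ℝ) :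
    Integrable (fun ω => C ω * Complex.cos ((θ ω : ℂ) * (x : ℂ))) μ := by
  refine (hC.norm.mono' (hC.aestronglyMeasurable.mul
    ((Complex.continuous_cos.comp (by fun_prop)).aestronglyMeasurable)) ?_)
  filter_upwards with ω
  rw [norm_mul]
  calc ‖C ω‖ * ‖Complex.cos ((θ ω : ℂ) * (x : ℂ))‖ ≤ ‖C ω‖ * 1 := by
        have := norm_cos_real_le_one (θ ω) x; gcongr
    _ = ‖C ω‖ := mul_one _

theorem fc_norm_le (E : H →L[ℂ] H) (hE : IsSelfAdjoint E) (a : ℝ)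
    (hspec : spectrum ℝ E ⊆ {lam : ℝ | a ≤ |lam|})
    (g : ℝ → ℂ) (hg : Continuous g) (b : ℝ) (hb : 0 ≤ b)
    (hbd : ∀ lam : ℝ, a ≤ |lam| → ‖g lam‖ ≤ b) :
    ‖fc g E‖ ≤ b := by
  have hE' : IsStarNormal E := hE.isStarNormal
  refine norm_cfc_le hb fun z hz => ?_
  exact hbd _ (hspec (hE.spectrumRestricts.apply_mem hz))

end Helpers

section Fourier

variable (f : SchwartzMap ℝ ℂ)

theorem hat_eq (t : ℝ) : fourierHat (fun x => f x) t = 𝓕 (fun x : ℝ => f x) (t / (2 * π)) := by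
  rw [Real.fourier_real_eq_integral_exp_smul]
  simp only [fourierHat, smul_eq_mul]
  refine integral_congr_ae (.of_forall fun x => ?_)
  dsimp only
  rw [mul_comm]
  congr 2
  have harg : -2 * π * x * (t / (2 * π)) = -(t * x) := by
    field_simp
  rw [harg]
  push_cast
  ring

theorem hFint : Integrable (𝓕 (fun x : ℝ => f x)) := by
  have h := (SchwartzMap.fourierTransformCLM ℂ f).integrable (μ := volume)
  rwa [SchwartzMap.fourierTransformCLM_apply] at h

theorem hfhInt : Integrable (fourierHat (fun x => f x)) := by
  have h2π : (2 * π : ℝ) ≠ 0 := by positivity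
  have h2 := (hFint f).comp_div h2π
  exact (integrable_congr (.of_forall fun t => (hat_eq f t).symm)).mp h2

theorem schwartz_inv (x : ℝ) :
    (f x : ℂ) = ∫ t : ℝ,
      ((2 * π : ℝ) : ℂ)⁻¹ * fourierHat (fun y => f y) t * Complex.exp (Complex.I * t * x) := by
  have h2π : (0:ℝ) < 2 * π := by positivity
  have hinv0 : 𝓕⁻ (𝓕 (fun x : ℝ => f x)) = fun x : ℝ => f x :=
    f.continuous.fourierInv_fourier_eq f.integrable (hFint f)
  set G : ℝ → ℂ := fun v =>
    Complex.exp ((↑(-2 * π * v * (-x)) : ℂ) * Complex.I) * 𝓕 (fun y : ℝ => f y) v with hG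
  have step1 : ∀ t : ℝ,
      ((2 * π : ℝ) : ℂ)⁻¹ * fourierHat (fun y => f y) t * Complex.exp (Complex.I * t * x)
        = (2 * π : ℝ)⁻¹ • G (t / (2 * π)) := by
    intro t
    have har : ((↑(-2 * π * (t / (2 * π)) * (-x)) : ℂ) * Complex.I) = Complex.I * t * x := by
      have : (π : ℂ) ≠ 0 := Complex.ofReal_ne_zero.mpr Real.pi_ne_zero
      push_cast
      field_simp
    simp only [hG, har, hat_eq f t, Complex.real_smul]
    push_cast
    ring
  calc (f x : ℂ) = 𝓕⁻ (𝓕 (fun y : ℝ => f y)) x := by rw [hinv0]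
    _ = ∫ v, G v := by
        rw [Real.fourierInv_eq_fourier_neg,
          Real.fourier_real_eq_integral_exp_smul]
        exact integral_congr_ae (.of_forall fun v => smul_eq_mul _ _)
    _ = (2 * π : ℝ)⁻¹ • ((|2 * π| : ℝ) • ∫ v, G v) := by
        rw [smul_smul, abs_of_pos h2π, inv_mul_cancel₀ (ne_of_gt h2π), one_smul]
    _ = (2 * π : ℝ)⁻¹ • ∫ t : ℝ, G (t / (2 * π)) := by
        rw [MeasureTheory.Measure.integral_comp_div G (2 * π)]
    _ = ∫ t : ℝ, (2 * π : ℝ)⁻¹ • G (t / (2 * π)) := by rw [integral_smul]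
    _ = ∫ t : ℝ,
        ((2 * π : ℝ) : ℂ)⁻¹ * fourierHat (fun y => f y) t * Complex.exp (Complex.I * t * x) := by
        exact integral_congr_ae (.of_forall fun t => (step1 t).symm)

end Fourier

section Reps

variable (f : SchwartzMap ℝ ℂ)

lemma norm_exp_I_mul (t x : ℝ) : ‖Complex.exp (Complex.I * t * x)‖ = 1 := by
  rw [Complex.norm_exp]
  simp [Complex.mul_re]

noncomputable def Ct : ℝ → ℂ := fun t => ((2 * π : ℝ) : ℂ)⁻¹ * fourierHat (fun y => f y) t

lemma CtInt : Integrable (Ct f) := (hfhInt f).const_mul _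

lemma hexpInt (x : ℝ) :
    Integrable (fun t => Ct f t * Complex.exp (Complex.I * t * x)) := by
  refine (CtInt f).norm.mono' ?_ ?_
  · exact (CtInt f).aestronglyMeasurable.mul
      (Complex.continuous_exp.comp (by fun_prop)).aestronglyMeasurable
  · filter_upwards with t
    rw [norm_mul, norm_exp_I_mul, mul_one]

lemma schwartz_inv' (y : ℝ) :
    (f y : ℂ) = ∫ t : ℝ, Ct f t * Complex.exp (Complex.I * t * y) := schwartz_inv f y

lemma heRep (x : ℝ) : ((f x : ℂ) + f (-x)) / 2 = ∫ t : ℝ, Ct f t * Complex.cos ((t:ℂ) * (x:ℂ)) := by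
  rw [schwartz_inv' f x, schwartz_inv' f (-x)]
  rw [← integral_add (hexpInt f x) (hexpInt f (-x)), ← integral_div]
  refine integral_congr_ae (.of_forall fun t => ?_)
  have h2 := Complex.two_cos ((t:ℂ) * (x:ℂ))
  have e1 : Complex.I * (t:ℂ) * ((-x:ℝ):ℂ) = -((t:ℂ) * (x:ℂ)) * Complex.I := by push_cast; ring
  have e2 : Complex.I * (t:ℂ) * (x:ℂ) = ((t:ℂ) * (x:ℂ)) * Complex.I := by ring
  dsimp only
  rw [e1, e2]
  linear_combination (-(Ct f t) / 2) * h2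

lemma hoRep (x : ℝ) : ((f x : ℂ) - f (-x)) / 2
    = ∫ t : ℝ, Ct f t * (Complex.I * Complex.sin ((t:ℂ) * (x:ℂ))) := by
  rw [schwartz_inv' f x, schwartz_inv' f (-x)]
  rw [← integral_sub (hexpInt f x) (hexpInt f (-x)), ← integral_div]
  refine integral_congr_ae (.of_forall fun t => ?_)
  have h2 := Complex.two_sin ((t:ℂ) * (x:ℂ))
  have e1 : Complex.I * (t:ℂ) * ((-x:ℝ):ℂ) = -((t:ℂ) * (x:ℂ)) * Complex.I := by push_cast; ring
  have e2 : Complex.I * (t:ℂ) * (x:ℂ) = ((t:ℂ) * (x:ℂ)) * Complex.I := by ring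
  dsimp only
  rw [e1, e2]
  linear_combination (-(Ct f t) * Complex.I / 2) * h2
    + (Ct f t / 2 * (Complex.exp (((t:ℂ)*(x:ℂ)) * Complex.I)
        - Complex.exp (-((t:ℂ)*(x:ℂ)) * Complex.I))) * Complex.I_sq

end Reps

section Odd

variable (f : SchwartzMap ℝ ℂ)

noncomputable def Qd : ℝ × ℝ → ℂ := fun p => (starRingEnd ℂ) (Ct f p.1) * Ct f p.2 / 2

lemma CtConjInt : Integrable (fun t => (starRingEnd ℂ) (Ct f t)) := by
  refine (CtInt f).norm.mono' ?_ ?_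
  · exact continuous_star.comp_aestronglyMeasurable (CtInt f).aestronglyMeasurable
  · filter_upwards with t
    simp

lemma QdInt : Integrable (Qd f) := by
  have h := (CtConjInt f).mul_prod (CtInt f)
  rw [← Measure.volume_eq_prod] at h
  exact h.div_const 2

lemma hoConjRep (x : ℝ) : (starRingEnd ℂ) (((f x : ℂ) - f (-x)) / 2)
    = ∫ t : ℝ, (starRingEnd ℂ) (Ct f t) * (-Complex.I * Complex.sin ((t:ℂ) * (x:ℂ))) := by
  rw [hoRep f x, ← integral_conj]
  refine integral_congr_ae (.of_forall fun t => ?_)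
  dsimp only
  have e : ((t:ℂ) * (x:ℂ)) = ((t * x : ℝ) : ℂ) := by push_cast; ring
  rw [e, ← Complex.ofReal_sin, map_mul, map_mul, Complex.conj_I, Complex.conj_ofReal]

lemma hRep (x : ℝ) :
    (starRingEnd ℂ) (((f x : ℂ) - f (-x)) / 2) * (((f x : ℂ) - f (-x)) / 2)
    = (∫ p : ℝ × ℝ, Qd f p * Complex.cos (((p.1 - p.2 : ℝ) : ℂ) * (x:ℂ)))
      - ∫ p : ℝ × ℝ, Qd f p * Complex.cos (((p.1 + p.2 : ℝ) : ℂ) * (x:ℂ)) := by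
  rw [hoConjRep f x, hoRep f x, ← integral_prod_mul, ← Measure.volume_eq_prod,
    ← integral_sub (intCos (fun p : ℝ × ℝ => p.1 - p.2) (QdInt f) (by fun_prop) x)
      (intCos (fun p : ℝ × ℝ => p.1 + p.2) (QdInt f) (by fun_prop) x)]
  refine integral_congr_ae (.of_forall fun p => ?_)
  dsimp only
  have hd : (((p.1 - p.2 : ℝ)) : ℂ) * (x:ℂ) = (p.1:ℂ)*(x:ℂ) - (p.2:ℂ)*(x:ℂ) := by
    push_cast; ring
  have hs : (((p.1 + p.2 : ℝ)) : ℂ) * (x:ℂ) = (p.1:ℂ)*(x:ℂ) + (p.2:ℂ)*(x:ℂ) := by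
    push_cast; ring
  rw [hd, hs, Complex.cos_sub, Complex.cos_add]
  simp only [Qd]
  linear_combination (-((starRingEnd ℂ) (Ct f p.1) * Ct f p.2
    * Complex.sin ((p.1:ℂ)*(x:ℂ)) * Complex.sin ((p.2:ℂ)*(x:ℂ)))) * Complex.I_sq

end Odd



/-- if `cos(tD) P = cos(tE) P` for all `t ∈ [0, 2r]` and the
spectrum of `E` lies in `{λ : a ≤ |λ|}`, then for every Schwartz function (not necessarily even)
`f` with `f̂` supported in `[-r, r]`,
`‖f(D) P‖ ≤ 2 · ‖P‖ · sup {|f(λ)| : a ≤ |λ|}`. -/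
theorem statement5 {H : Type*} [NormedAddCommGroup H] [InnerProductSpace ℂ H]
    [CompleteSpace H] (D E P : H →L[ℂ] H)
    (hD : IsSelfAdjoint D) (hE : IsSelfAdjoint E) (r a : ℝ) (hr : 0 < r) (ha : 0 < a)
    (hcos : ∀ t ∈ Set.Icc (0 : ℝ) (2 * r),
      fc (fun x : ℝ => Complex.cos ((t : ℂ) * x)) D ∘L P =
        fc (fun x : ℝ => Complex.cos ((t : ℂ) * x)) E ∘L P)
    (hspec : spectrum ℝ E ⊆ {lam : ℝ | a ≤ |lam|})
    (f : SchwartzMap ℝ ℂ)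
    (hf_supp : Function.support (fourierHat fun x => f x) ⊆ Set.Icc (-r) r) :
    ‖fc (fun x => f x) D ∘L P‖ ≤ 2 * ‖P‖ * ⨆ lam : {x : ℝ // a ≤ |x|}, ‖f (lam : ℝ)‖ := by
  set S : ℝ := ⨆ lam : {x : ℝ // a ≤ |x|}, ‖f (lam : ℝ)‖ with hS
  have hbdd : BddAbove (Set.range fun lam : {x : ℝ // a ≤ |x|} => ‖f (lam : ℝ)‖) := by
    refine ⟨SchwartzMap.seminorm ℝ 0 0 f, ?_⟩
    rintro y ⟨lam, rfl⟩
    exact SchwartzMap.norm_le_seminorm ℝ f _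
  have hfS : ∀ lam : ℝ, a ≤ |lam| → ‖f lam‖ ≤ S := fun lam hlam =>
    le_ciSup hbdd (⟨lam, hlam⟩ : {x : ℝ // a ≤ |x|})
  have hS0 : 0 ≤ S := le_trans (norm_nonneg _) (hfS a (by rw [abs_of_pos ha]))
  -- even and odd parts
  set fe : ℝ → ℂ := fun x => ((f x : ℂ) + f (-x)) / 2 with hfe
  set fo : ℝ → ℂ := fun x => ((f x : ℂ) - f (-x)) / 2 with hfo
  have hfec : Continuous fe :=
    ((f.continuous.add (f.continuous.comp continuous_neg)).div_const 2)
  have hfoc : Continuous fo :=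
    ((f.continuous.sub (f.continuous.comp continuous_neg)).div_const 2)
  have hfeS : ∀ lam : ℝ, a ≤ |lam| → ‖fe lam‖ ≤ S := by
    intro lam hlam
    have h1 := hfS lam hlam
    have h2 := hfS (-lam) (by rwa [abs_neg])
    have h3 : ‖(f lam : ℂ) + f (-lam)‖ ≤ S + S := (norm_add_le _ _).trans (by linarith)
    calc ‖fe lam‖ = ‖(f lam : ℂ) + f (-lam)‖ / 2 := by
          rw [hfe]; rw [norm_div]; norm_num
      _ ≤ (S + S) / 2 := by linarith
      _ = S := by ring
  have hfoS : ∀ lam : ℝ, a ≤ |lam| → ‖fo lam‖ ≤ S := by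
    intro lam hlam
    have h1 := hfS lam hlam
    have h2 := hfS (-lam) (by rwa [abs_neg])
    have h3 : ‖(f lam : ℂ) - f (-lam)‖ ≤ S + S := (norm_sub_le _ _).trans (by linarith)
    calc ‖fo lam‖ = ‖(f lam : ℂ) - f (-lam)‖ / 2 := by
          rw [hfo]; rw [norm_div]; norm_num
      _ ≤ (S + S) / 2 := by linarith
      _ = S := by ring
  -- support of the Fourier transform
  have hCt_supp : ∀ t : ℝ, Ct f t ≠ 0 → |t| ≤ r := by
    intro t ht
    have h1 : fourierHat (fun x => f x) t ≠ 0 := by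
      intro h
      apply ht
      simp [Ct, h]
    have h2 := hf_supp h1
    exact abs_le.mpr ⟨h2.1, h2.2⟩
  -- cosine transfer for all |t| ≤ 2r
  have hcos2 : ∀ t : ℝ, |t| ≤ 2 * r →
      fc (fun x : ℝ => Complex.cos ((t : ℂ) * x)) D ∘L P =
        fc (fun x : ℝ => Complex.cos ((t : ℂ) * x)) E ∘L P := by
    intro t ht
    rcases le_total 0 t with h0 | h0
    · exact hcos t ⟨h0, by rwa [abs_of_nonneg h0] at ht⟩
    · have h1 : (fun x : ℝ => Complex.cos ((t : ℂ) * x))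
          = fun x : ℝ => Complex.cos ((((-t : ℝ)) : ℂ) * x) := by
        funext x
        push_cast
        rw [neg_mul, Complex.cos_neg]
      rw [h1]
      exact hcos (-t) ⟨neg_nonneg.2 h0, by rw [abs_of_nonpos h0] at ht; linarith⟩
  -- even part transfer
  have heT : fc fe D ∘L P = fc fe E ∘L P := by
    refine fc_transfer D E P hD hE volume (Ct f) (fun t => t) (CtInt f) continuous_id
      fe (fun x => heRep f x) hfec ?_
    intro t ht
    exact hcos2 t ((hCt_supp t ht).trans (by linarith))
  -- odd part: the two double-integral pieces
  set g1 : ℝ → ℂ :=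
    fun x => ∫ p : ℝ × ℝ, Qd f p * Complex.cos (((p.1 - p.2 : ℝ) : ℂ) * (x:ℂ)) with hg1
  set g2 : ℝ → ℂ :=
    fun x => ∫ p : ℝ × ℝ, Qd f p * Complex.cos (((p.1 + p.2 : ℝ) : ℂ) * (x:ℂ)) with hg2
  have hθ1 : Continuous fun p : ℝ × ℝ => p.1 - p.2 := by fun_prop
  have hθ2 : Continuous fun p : ℝ × ℝ => p.1 + p.2 := by fun_prop
  have hg1c : Continuous g1 := contInt volume (Qd f) _ (QdInt f) hθ1
  have hg2c : Continuous g2 := contInt volume (Qd f) _ (QdInt f) hθ2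
  have hQsupp : ∀ p : ℝ × ℝ, Qd f p ≠ 0 → |p.1| ≤ r ∧ |p.2| ≤ r := by
    intro p hp
    constructor
    · refine hCt_supp p.1 fun h => hp ?_
      simp [Qd, h]
    · refine hCt_supp p.2 fun h => hp ?_
      simp [Qd, h]
  have hoT1 : fc g1 D ∘L P = fc g1 E ∘L P := by
    refine fc_transfer D E P hD hE volume (Qd f) (fun p => p.1 - p.2) (QdInt f) hθ1
      g1 (fun x => rfl) hg1c ?_
    intro p hp
    obtain ⟨h1, h2⟩ := hQsupp p hp
    refine hcos2 _ ?_
    calc |p.1 - p.2| ≤ |p.1| + |p.2| := abs_sub _ _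
      _ ≤ 2 * r := by linarith
  have hoT2 : fc g2 D ∘L P = fc g2 E ∘L P := by
    refine fc_transfer D E P hD hE volume (Qd f) (fun p => p.1 + p.2) (QdInt f) hθ2
      g2 (fun x => rfl) hg2c ?_
    intro p hp
    obtain ⟨h1, h2⟩ := hQsupp p hp
    refine hcos2 _ ?_
    calc |p.1 + p.2| ≤ |p.1| + |p.2| := abs_add_le _ _
      _ ≤ 2 * r := by linarith
  -- the function conj fo * fo
  have hhfn_eq : (fun x : ℝ => (starRingEnd ℂ) (fo x) * fo x) = fun x => g1 x - g2 x := by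
    funext x
    simp only [hfo, hg1, hg2]
    exact hRep f x
  have hoddT : fc (fun x : ℝ => (starRingEnd ℂ) (fo x) * fo x) D ∘L P
      = fc (fun x : ℝ => (starRingEnd ℂ) (fo x) * fo x) E ∘L P := by
    have hsub : ∀ (A : H →L[ℂ] H), IsSelfAdjoint A →
        fc (fun x : ℝ => (starRingEnd ℂ) (fo x) * fo x) A = fc g1 A - fc g2 A := by
      intro A hA
      rw [hhfn_eq, fc, fc, fc]
      have hA' : IsStarNormal A := hA.isStarNormal
      exact cfc_sub _ _ A
        ((hg1c.comp Complex.continuous_re).continuousOn)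
        ((hg2c.comp Complex.continuous_re).continuousOn)
    rw [hsub D hD, hsub E hE, ContinuousLinearMap.sub_comp, ContinuousLinearMap.sub_comp,
      hoT1, hoT2]
  -- star and multiplication
  have hstar : star (fc fo D) = fc (fun x => (starRingEnd ℂ) (fo x)) D :=
    (cfc_star (fun z : ℂ => fo z.re) D).symm
  have hmul : star (fc fo D) * fc fo D
      = fc (fun x : ℝ => (starRingEnd ℂ) (fo x) * fo x) D := by
    rw [hstar]
    exact (cfc_mul _ _ D
      ((continuous_star.comp (hfoc.comp Complex.continuous_re)).continuousOn)
      ((hfoc.comp Complex.continuous_re).continuousOn)).symm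
  -- norm bound for the odd square on E
  have hhbound : ‖fc (fun x : ℝ => (starRingEnd ℂ) (fo x) * fo x) E‖ ≤ S * S := by
    refine fc_norm_le E hE a hspec (fun x : ℝ => (starRingEnd ℂ) (fo x) * fo x)
      ((continuous_star.comp hfoc).mul hfoc) (S * S) (by positivity) ?_
    intro lam hlam
    rw [norm_mul, RCLike.norm_conj]
    exact mul_le_mul (hfoS lam hlam) (hfoS lam hlam) (norm_nonneg _) hS0
  -- odd part norm estimate via the C*-identity
  have hodd : ‖fc fo D ∘L P‖ ≤ ‖P‖ * S := by
    have hcs : ‖fc fo D ∘L P‖ * ‖fc fo D ∘L P‖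
        ≤ ‖P‖ * (S * S * ‖P‖) := by
      have e0 : fc fo D ∘L P = fc fo D * P := rfl
      have hoddT' : fc (fun x : ℝ => (starRingEnd ℂ) (fo x) * fo x) D * P
          = fc (fun x : ℝ => (starRingEnd ℂ) (fo x) * fo x) E * P := hoddT
      calc ‖fc fo D ∘L P‖ * ‖fc fo D ∘L P‖
          = ‖star (fc fo D * P) * (fc fo D * P)‖ := by
            rw [CStarRing.norm_star_mul_self, e0]
        _ = ‖star P * (fc (fun x : ℝ => (starRingEnd ℂ) (fo x) * fo x) E * P)‖ := by
            rw [star_mul, mul_assoc, ← mul_assoc (star (fc fo D)), hmul, hoddT']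
        _ ≤ ‖star P‖ * ‖fc (fun x : ℝ => (starRingEnd ℂ) (fo x) * fo x) E * P‖ :=
            norm_mul_le _ _
        _ ≤ ‖star P‖ * (‖fc (fun x : ℝ => (starRingEnd ℂ) (fo x) * fo x) E‖ * ‖P‖) := by
            have := norm_mul_le (fc (fun x : ℝ => (starRingEnd ℂ) (fo x) * fo x) E) P
            gcongr
        _ ≤ ‖P‖ * (S * S * ‖P‖) := by
            rw [norm_star]
            gcongr
    nlinarith [norm_nonneg (fc fo D ∘L P), norm_nonneg P, hS0,
      mul_nonneg (norm_nonneg P) hS0, sq_nonneg (‖fc fo D ∘L P‖ - ‖P‖ * S),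
      sq_nonneg (‖fc fo D ∘L P‖ + ‖P‖ * S)]
  -- even part norm estimate
  have heven : ‖fc fe D ∘L P‖ ≤ S * ‖P‖ := by
    rw [heT]
    calc ‖fc fe E ∘L P‖ ≤ ‖fc fe E‖ * ‖P‖ := ContinuousLinearMap.opNorm_comp_le _ _
      _ ≤ S * ‖P‖ := by
        have := fc_norm_le E hE a hspec fe hfec S hS0 hfeS
        gcongr
  -- split f into even and odd parts
  have hsplit : fc (fun x => f x) D = fc fe D + fc fo D := by
    have hfeq : (fun z : ℂ => (f z.re : ℂ)) = fun z : ℂ => fe z.re + fo z.re := by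
      funext z
      simp only [hfe, hfo]
      ring
    rw [fc, hfeq, fc, fc]
    exact cfc_add D _ _
      ((hfec.comp Complex.continuous_re).continuousOn)
      ((hfoc.comp Complex.continuous_re).continuousOn)
  calc ‖fc (fun x => f x) D ∘L P‖ = ‖fc fe D ∘L P + fc fo D ∘L P‖ := by
        rw [hsplit, ContinuousLinearMap.add_comp]
    _ ≤ ‖fc fe D ∘L P‖ + ‖fc fo D ∘L P‖ := norm_add_le _ _
    _ ≤ S * ‖P‖ + ‖P‖ * S := add_le_add heven hodd
    _ = 2 * ‖P‖ * S := by ring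
end
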